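/- Let H be a finite graph, let A ⊆ V(H) be a subset for which there exists a minimum fractional vertex cover (c_v) with c_v = 1 for all v ∈ A and c_v ∈ {0, 1/2} for v ∉ A. Let E_1 be the set of edges of H with exactly one endpoint in A, and E_0 the set of edges with no endpoint in A. Then for any maximum fractional matching (w_e) of H: ∑_{e ∈ E_1} w_e = |A| and ∑_{e ∈ E_0} w_e = c(H) − |A|. -/

import Mathlib

open Finset

variable {V : Type*}

/-- Sum of edge weights over all edges containing vertex `v`. -/
def vertexDegSum [Fintype V] [DecidableEq V] (w : Sym2 V → ℝ) (v : V) : ℝ :=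
  ∑ e ∈ Finset.univ.filter (fun e : Sym2 V => v ∈ e), w e

/-- Total weight of an edge weighting. -/
def edgeTotal [Fintype V] [DecidableEq V] (w : Sym2 V → ℝ) : ℝ :=
  ∑ e : Sym2 V, w e

/-- A fractional matching of `G`. -/
def IsFracMatching [Fintype V] [DecidableEq V] (G : SimpleGraph V) (w : Sym2 V → ℝ) : Prop :=
  (∀ e, 0 ≤ w e) ∧ (∀ e, e ∉ G.edgeSet → w e = 0) ∧ ∀ v, vertexDegSum w v ≤ 1

/-- A fractional edge cover of `G`. -/
def IsFracEdgeCover [Fintype V] [DecidableEq V] (G : SimpleGraph V) (w : Sym2 V → ℝ) : Prop :=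
  (∀ e, 0 ≤ w e) ∧ (∀ e, e ∉ G.edgeSet → w e = 0) ∧ ∀ v, 1 ≤ vertexDegSum w v

/-- A maximum fractional matching. -/
def IsMaxFracMatching [Fintype V] [DecidableEq V] (G : SimpleGraph V) (w : Sym2 V → ℝ) : Prop :=
  IsFracMatching G w ∧ ∀ w', IsFracMatching G w' → edgeTotal w' ≤ edgeTotal w

/-- A minimum fractional edge cover. -/
def IsMinFracEdgeCover [Fintype V] [DecidableEq V] (G : SimpleGraph V) (w : Sym2 V → ℝ) : Prop :=
  IsFracEdgeCover G w ∧ ∀ w', IsFracEdgeCover G w' → edgeTotal w ≤ edgeTotal w'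

/-- A fractional vertex cover of `G`. -/
def IsFracCover (G : SimpleGraph V) (c : V → ℝ) : Prop :=
  (∀ v, 0 ≤ c v) ∧ ∀ u v, G.Adj u v → 1 ≤ c u + c v

/-- Total weight of a vertex weighting. -/
def coverTotal [Fintype V] (c : V → ℝ) : ℝ := ∑ v, c v

/-- A minimum fractional vertex cover. -/
def IsMinFracCover [Fintype V] (G : SimpleGraph V) (c : V → ℝ) : Prop :=
  IsFracCover G c ∧ ∀ c', IsFracCover G c' → coverTotal c ≤ coverTotal c'

/-- An edge is bad if it has weight 1 in every maximum fractional matching. -/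
def IsBadEdge [Fintype V] [DecidableEq V] (G : SimpleGraph V) (e : Sym2 V) : Prop :=
  ∀ w, IsMaxFracMatching G w → w e = 1

section AuxLemmas
variable [Fintype V] [DecidableEq V]

lemma filter_mem_sym2 (u v : V) :
    univ.filter (fun x : V => x ∈ s(u, v)) = {u, v} := by
  ext x
  simp [Sym2.mem_iff]

lemma edgeCsum_eval (c : V → ℝ) (u v : V) (huv : u ≠ v) :
    ∑ x ∈ univ.filter (fun x : V => x ∈ s(u, v)), c x = c u + c v := by
  rw [filter_mem_sym2 u v, Finset.sum_pair huv]

lemma swap_sum (w : Sym2 V → ℝ) (c : V → ℝ) :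
    ∑ e : Sym2 V, w e * ∑ x ∈ univ.filter (fun x : V => x ∈ e), c x
      = ∑ v, c v * vertexDegSum w v := by
  simp only [Finset.mul_sum, vertexDegSum]
  rw [Finset.sum_comm' (t' := (univ : Finset V))
    (s' := fun x => univ.filter (fun e : Sym2 V => x ∈ e)) (by simp)]
  simp [Finset.mul_sum, mul_comm]

lemma term_le (G : SimpleGraph V) (w : Sym2 V → ℝ) (hw : IsFracMatching G w)
    (c : V → ℝ) (hc : IsFracCover G c) (e : Sym2 V) :
    w e ≤ w e * ∑ x ∈ univ.filter (fun x : V => x ∈ e), c x := by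
  by_cases h : w e = 0
  · simp [h]
  · have he : e ∈ G.edgeSet := by
      by_contra hne
      exact h (hw.2.1 e hne)
    induction e using Sym2.ind with
    | _ u v =>
      rw [SimpleGraph.mem_edgeSet] at he
      rw [edgeCsum_eval c u v he.ne]
      nlinarith [hc.2 u v he, hw.1 (s(u, v))]

lemma term_le' (w : Sym2 V → ℝ) (hw : IsFracMatching G w)
    (c : V → ℝ) (hc : IsFracCover G c) (v : V) :
    c v * vertexDegSum w v ≤ c v := by
  nlinarith [hc.1 v, hw.2.2 v]

lemma weak_duality (G : SimpleGraph V) (w : Sym2 V → ℝ) (hw : IsFracMatching G w)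
    (c : V → ℝ) (hc : IsFracCover G c) :
    edgeTotal w ≤ coverTotal c := by
  calc edgeTotal w ≤ ∑ e : Sym2 V, w e * ∑ x ∈ univ.filter (fun x : V => x ∈ e), c x :=
        Finset.sum_le_sum (fun e _ => term_le G w hw c hc e)
    _ = ∑ v, c v * vertexDegSum w v := swap_sum w c
    _ ≤ ∑ v, c v := Finset.sum_le_sum (fun v _ => term_le' w hw c hc v)
    _ = coverTotal c := rfl

lemma slackness (G : SimpleGraph V) (w : Sym2 V → ℝ) (hw : IsFracMatching G w)
    (c : V → ℝ) (hc : IsFracCover G c) (heq : edgeTotal w = coverTotal c) :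
    (∀ e : Sym2 V, w e * ∑ x ∈ univ.filter (fun x : V => x ∈ e), c x = w e) ∧
    (∀ v, c v ≠ 0 → vertexDegSum w v = 1) := by
  have h1 : edgeTotal w ≤ ∑ e : Sym2 V, w e * ∑ x ∈ univ.filter (fun x : V => x ∈ e), c x :=
    Finset.sum_le_sum (fun e _ => term_le G w hw c hc e)
  have h2 : ∑ e : Sym2 V, w e * ∑ x ∈ univ.filter (fun x : V => x ∈ e), c x
      = ∑ v, c v * vertexDegSum w v := swap_sum w c
  have h3 : ∑ v, c v * vertexDegSum w v ≤ coverTotal c :=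
    Finset.sum_le_sum (fun v _ => term_le' w hw c hc v)
  have e1 : edgeTotal w = ∑ e : Sym2 V, w e * ∑ x ∈ univ.filter (fun x : V => x ∈ e), c x :=
    le_antisymm h1 (by linarith)
  have e3 : ∑ v, c v * vertexDegSum w v = coverTotal c :=
    le_antisymm h3 (by linarith)
  constructor
  · intro e
    have := (Finset.sum_eq_sum_iff_of_le (fun e _ => term_le G w hw c hc e)).mp e1 e (mem_univ e)
    linarith
  · intro v hv
    have := (Finset.sum_eq_sum_iff_of_le (fun v _ => term_le' w hw c hc v)).mp e3 v (mem_univ v)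
    exact mul_left_cancel₀ hv (this.trans (mul_one (c v)).symm)

open scoped Classical in
lemma hall_AZ (G : SimpleGraph V) (A : Finset V) (c : V → ℝ)
    (hc : IsMinFracCover G c) (hA1 : ∀ v ∈ A, c v = 1) (hA2 : ∀ v ∉ A, c v = 0 ∨ c v = 1/2) :
    ∃ g : {v // v ∈ A} → V, Function.Injective g ∧
      ∀ a, c (g a) = 0 ∧ G.Adj ↑a (g a) := by
  set t : {v // v ∈ A} → Finset V := fun a => univ.filter (fun z => c z = 0 ∧ G.Adj ↑a z) with ht
  suffices h : ∀ s : Finset {v // v ∈ A}, s.card ≤ (s.biUnion t).card by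
    obtain ⟨g, hg1, hg2⟩ := (Finset.all_card_le_biUnion_card_iff_exists_injective t).mp h
    refine ⟨g, hg1, fun a => ?_⟩
    have := hg2 a
    simp only [ht, Finset.mem_filter] at this
    exact this.2
  intro s
  by_contra hlt
  push_neg at hlt
  set S : Finset V := s.image Subtype.val with hS
  set NZ := s.biUnion t with hNZ
  have hScard : S.card = s.card := Finset.card_image_of_injective s Subtype.val_injective
  have hSA : ∀ v ∈ S, c v = 1 := by
    intro v hv
    rw [hS, Finset.mem_image] at hv
    obtain ⟨a, _, rfl⟩ := hv
    exact hA1 _ a.2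
  have hNZ0 : ∀ v ∈ NZ, c v = 0 := by
    intro v hv
    rw [hNZ, Finset.mem_biUnion] at hv
    obtain ⟨a, _, hv⟩ := hv
    simp only [ht, Finset.mem_filter] at hv
    exact hv.2.1
  have hclosure : ∀ x ∈ S, ∀ y, c y = 0 → G.Adj x y → y ∈ NZ := by
    intro x hx y hy hadj
    rw [hS, Finset.mem_image] at hx
    obtain ⟨a, ha, rfl⟩ := hx
    rw [hNZ, Finset.mem_biUnion]
    exact ⟨a, ha, by simp [ht, hy, hadj]⟩
  have hdisj : ∀ v, ¬(v ∈ S ∧ v ∈ NZ) := by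
    rintro v ⟨h1, h2⟩
    have := hSA v h1; have := hNZ0 v h2; linarith
  set c' : V → ℝ := fun v => if v ∈ S ∨ v ∈ NZ then 1/2 else c v with hc'
  have hc'cover : IsFracCover G c' := by
    constructor
    · intro v
      rw [hc']
      dsimp only
      split
      · norm_num
      · exact hc.1.1 v
    · intro u v hadj
      have key : ∀ x y, G.Adj x y → (x ∈ S ∨ x ∈ NZ) → 1 ≤ c' x + c' y := by
        intro x y hxy hx
        have hcx : c' x = 1/2 := by simp only [hc', if_pos hx]
        by_cases hy : y ∈ S ∨ y ∈ NZ
        · have hcy : c' y = 1/2 := by simp only [hc', if_pos hy]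
          rw [hcx, hcy]; norm_num
        · have hcy : c' y = c y := by simp only [hc', if_neg hy]
          have h12 : 1/2 ≤ c y := by
            rcases hx with hx | hx
            · rcases em (y ∈ A) with h | h
              · rw [hA1 y h]; norm_num
              · rcases hA2 y h with h0 | hhalf
                · exact absurd (hclosure x hx y h0 hxy) (fun hyNZ => hy (Or.inr hyNZ))
                · rw [hhalf]
            · have hx0 := hNZ0 x hx
              have := hc.1.2 x y hxy
              linarith
          rw [hcx, hcy]; linarith
      by_cases hu : u ∈ S ∨ u ∈ NZ
      · exact key u v hadj hu
      · by_cases hv : v ∈ S ∨ v ∈ NZ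
        · linarith [key v u hadj.symm hv]
        · have h1 : c' u = c u := by simp only [hc', if_neg hu]
          have h2 : c' v = c v := by simp only [hc', if_neg hv]
          rw [h1, h2]
          exact hc.1.2 u v hadj
  have hpt : ∀ v, c' v - c v = (if v ∈ S then -(1/2:ℝ) else 0) + (if v ∈ NZ then (1/2:ℝ) else 0) := by
    intro v
    by_cases h1 : v ∈ S
    · have h2 : v ∉ NZ := fun h => hdisj v ⟨h1, h⟩
      have : c' v = 1/2 := by simp only [hc', if_pos (Or.inl h1)]
      rw [this, hSA v h1, if_pos h1, if_neg h2]
      norm_num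
    · by_cases h2 : v ∈ NZ
      · have : c' v = 1/2 := by simp only [hc', if_pos (Or.inr h2)]
        rw [this, hNZ0 v h2, if_neg h1, if_pos h2]
        norm_num
      · have : c' v = c v := by simp only [hc', if_neg (not_or.mpr ⟨h1, h2⟩)]
        rw [this, if_neg h1, if_neg h2]
        ring
  have htot : coverTotal c' - coverTotal c = -(S.card:ℝ)/2 + (NZ.card:ℝ)/2 := by
    rw [coverTotal, coverTotal, ← Finset.sum_sub_distrib]
    rw [Finset.sum_congr rfl (fun v _ => hpt v), Finset.sum_add_distrib]
    rw [Finset.sum_ite_mem, Finset.sum_ite_mem, Finset.univ_inter, Finset.univ_inter,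
      Finset.sum_const, Finset.sum_const, nsmul_eq_mul, nsmul_eq_mul]
    ring
  have hmin := hc.2 c' hc'cover
  have hcast : (NZ.card : ℝ) < (s.card : ℝ) := by exact_mod_cast hlt
  rw [← hScard] at hcast
  linarith

open scoped Classical in
lemma hall_B (G : SimpleGraph V) (A : Finset V) (c : V → ℝ)
    (hc : IsMinFracCover G c) (hA1 : ∀ v ∈ A, c v = 1) (hA2 : ∀ v ∉ A, c v = 0 ∨ c v = 1/2) :
    ∃ g : {v : V // c v = 1/2} → V, Function.Injective g ∧
      ∀ b, c (g b) = 1/2 ∧ G.Adj ↑b (g b) := by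
  set t : {v : V // c v = 1/2} → Finset V :=
    fun b => univ.filter (fun y => c y = 1/2 ∧ G.Adj ↑b y) with ht
  suffices h : ∀ s : Finset {v : V // c v = 1/2}, s.card ≤ (s.biUnion t).card by
    obtain ⟨g, hg1, hg2⟩ := (Finset.all_card_le_biUnion_card_iff_exists_injective t).mp h
    refine ⟨g, hg1, fun b => ?_⟩
    have := hg2 b
    simp only [ht, Finset.mem_filter] at this
    exact this.2
  intro s
  by_contra hlt
  push_neg at hlt
  set S : Finset V := s.image Subtype.val with hS
  set T := s.biUnion t with hT
  have hScard : S.card = s.card := Finset.card_image_of_injective s Subtype.val_injective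
  have hShalf : ∀ v ∈ S, c v = 1/2 := by
    intro v hv
    rw [hS, Finset.mem_image] at hv
    obtain ⟨b, _, rfl⟩ := hv
    exact b.2
  have hThalf : ∀ v ∈ T, c v = 1/2 := by
    intro v hv
    rw [hT, Finset.mem_biUnion] at hv
    obtain ⟨b, _, hv⟩ := hv
    simp only [ht, Finset.mem_filter] at hv
    exact hv.2.1
  have hclosure : ∀ x ∈ S, ∀ y, c y = 1/2 → G.Adj x y → y ∈ T := by
    intro x hx y hy hadj
    rw [hS, Finset.mem_image] at hx
    obtain ⟨b, hb, rfl⟩ := hx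
    rw [hT, Finset.mem_biUnion]
    exact ⟨b, hb, by simp [ht, hy, hadj]⟩
  set c' : V → ℝ := fun v => if v ∈ T \ S then 1 else if v ∈ S \ T then 0 else c v with hc'
  have hcTS : ∀ v ∈ T \ S, c' v = 1 := fun v hv => by simp only [hc', if_pos hv]
  have hcST : ∀ v ∈ S \ T, c' v = 0 := by
    intro v hv
    have h1 : v ∉ T \ S := fun h => (Finset.mem_sdiff.mp h).2 (Finset.mem_sdiff.mp hv).1
    simp only [hc', if_neg h1, if_pos hv]
  have hcelse : ∀ v, v ∉ T \ S → v ∉ S \ T → c' v = c v := by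
    intro v h1 h2
    simp only [hc', if_neg h1, if_neg h2]
  have hc'nonneg : ∀ v, 0 ≤ c' v := by
    intro v
    by_cases h1 : v ∈ T \ S
    · rw [hcTS v h1]; norm_num
    · by_cases h2 : v ∈ S \ T
      · rw [hcST v h2]
      · rw [hcelse v h1 h2]; exact hc.1.1 v
  have hc'cover : IsFracCover G c' := by
    refine ⟨hc'nonneg, ?_⟩
    intro u v hadj
    -- key: if x ∈ S \ T and y ∉ T \ S then c' y = 1
    have key : ∀ x y, G.Adj x y → x ∈ S \ T → y ∉ T \ S → c' y = 1 := by
      intro x y hxy hx hy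
      obtain ⟨hxS, hxT⟩ := Finset.mem_sdiff.mp hx
      have hcx : c x = 1/2 := hShalf x hxS
      have hcy2 : 1 ≤ c x + c y := hc.1.2 x y hxy
      have hy1 : c y = 1 := by
        rcases em (y ∈ A) with h | h
        · exact hA1 y h
        · rcases hA2 y h with h0 | hhalf
          · exfalso; rw [hcx, h0] at hcy2; norm_num at hcy2
          · -- c y = 1/2, so y ∈ T
            have hyT := hclosure x hxS y hhalf hxy
            -- y ∈ T \ S unless y ∈ S; if y ∈ S then x ∈ T, contradiction
            by_cases hyS : y ∈ S
            · exact absurd (hclosure y hyS x hcx hxy.symm) hxT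
            · exact absurd (Finset.mem_sdiff.mpr ⟨hyT, hyS⟩) hy
      have hyS : y ∉ S := by
        intro h; rw [hShalf y h] at hy1; norm_num at hy1
      have hyT : y ∉ T := by
        intro h; rw [hThalf y h] at hy1; norm_num at hy1
      rw [hcelse y hy (fun h => hyS (Finset.mem_sdiff.mp h).1), hy1]
    by_cases hu1 : u ∈ T \ S
    · rw [hcTS u hu1]; linarith [hc'nonneg v]
    · by_cases hv1 : v ∈ T \ S
      · rw [hcTS v hv1]; linarith [hc'nonneg u]
      · by_cases hu2 : u ∈ S \ T
        · rw [key u v hadj hu2 hv1]; linarith [hc'nonneg u]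
        · by_cases hv2 : v ∈ S \ T
          · rw [key v u hadj.symm hv2 hu1]; linarith [hc'nonneg v]
          · rw [hcelse u hu1 hu2, hcelse v hv1 hv2]
            exact hc.1.2 u v hadj
  have hpt : ∀ v, c' v - c v =
      (if v ∈ T \ S then (1/2:ℝ) else 0) + (if v ∈ S \ T then -(1/2:ℝ) else 0) := by
    intro v
    by_cases h1 : v ∈ T \ S
    · have h2 : v ∉ S \ T := fun h => (Finset.mem_sdiff.mp h).2 (Finset.mem_sdiff.mp h1).1
      rw [hcTS v h1, hThalf v (Finset.mem_sdiff.mp h1).1, if_pos h1, if_neg h2]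
      norm_num
    · by_cases h2 : v ∈ S \ T
      · rw [hcST v h2, hShalf v (Finset.mem_sdiff.mp h2).1, if_neg h1, if_pos h2]
        norm_num
      · rw [hcelse v h1 h2, if_neg h1, if_neg h2]
        ring
  have htot : coverTotal c' - coverTotal c = ((T \ S).card : ℝ)/2 - ((S \ T).card : ℝ)/2 := by
    rw [coverTotal, coverTotal, ← Finset.sum_sub_distrib]
    rw [Finset.sum_congr rfl (fun v _ => hpt v), Finset.sum_add_distrib]
    rw [Finset.sum_ite_mem, Finset.sum_ite_mem, Finset.univ_inter, Finset.univ_inter,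
      Finset.sum_const, Finset.sum_const, nsmul_eq_mul, nsmul_eq_mul]
    ring
  have hcardlt : (T \ S).card < (S \ T).card := by
    have h1 : (T \ S).card + (T ∩ S).card = T.card := Finset.card_sdiff_add_card_inter T S
    have h2 : (S \ T).card + (S ∩ T).card = S.card := Finset.card_sdiff_add_card_inter S T
    have h3 : (T ∩ S).card = (S ∩ T).card := by rw [Finset.inter_comm]
    have h4 : T.card < S.card := by rw [hScard]; exact hlt
    omega
  have hmin := hc.2 c' hc'cover
  have hcast : ((T \ S).card : ℝ) < ((S \ T).card : ℝ) := by exact_mod_cast hcardlt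
  linarith

lemma degsum_indicator {ι : Type*} [Fintype ι] (h : ι → Sym2 V) (r : ℝ) (v : V) :
    vertexDegSum (fun e => ∑ i, if h i = e then r else 0) v
      = ∑ i, if v ∈ h i then r else 0 := by
  rw [vertexDegSum, Finset.sum_comm]
  refine Finset.sum_congr rfl (fun i _ => ?_)
  rw [Finset.sum_ite_eq]
  simp

lemma edgeTotal_indicator {ι : Type*} [Fintype ι] (h : ι → Sym2 V) (r : ℝ) :
    edgeTotal (fun e => ∑ i, if h i = e then r else 0) = (Fintype.card ι : ℝ) * r := by
  rw [edgeTotal, Finset.sum_comm]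
  have : ∀ i : ι, ∑ e : Sym2 V, (if h i = e then r else 0) = r := by
    intro i
    rw [Finset.sum_ite_eq]
    simp
  rw [Finset.sum_congr rfl (fun i _ => this i), Finset.sum_const, nsmul_eq_mul,
    Finset.card_univ]

open scoped Classical in
lemma exists_good_matching (G : SimpleGraph V) (A : Finset V) (c : V → ℝ)
    (hc : IsMinFracCover G c) (hA1 : ∀ v ∈ A, c v = 1) (hA2 : ∀ v ∉ A, c v = 0 ∨ c v = 1/2) :
    ∃ w : Sym2 V → ℝ, IsFracMatching G w ∧ edgeTotal w = coverTotal c := by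
  obtain ⟨g, hg1, hg2⟩ := hall_AZ G A c hc hA1 hA2
  obtain ⟨f, hf1, hf2⟩ := hall_B G A c hc hA1 hA2
  have hf'inj : Function.Injective
      (fun b : {v : V // c v = 1/2} => (⟨f b, (hf2 b).1⟩ : {v : V // c v = 1/2})) :=
    fun a b hab => hf1 (congrArg Subtype.val hab)
  set σ : {v : V // c v = 1/2} ≃ {v : V // c v = 1/2} := Equiv.ofBijective _ (Finite.injective_iff_bijective.mp hf'inj) with hσ
  have hσval : ∀ b : {v : V // c v = 1/2}, (↑(σ b) : V) = f b := fun b => rfl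
  have hσadj : ∀ b : {v : V // c v = 1/2}, G.Adj ↑b ↑(σ b) := fun b => (hf2 b).2
  have hσne : ∀ b : {v : V // c v = 1/2}, σ b ≠ b := by
    intro b hb
    have := hσadj b
    rw [hb] at this
    exact G.irrefl this
  set w1 : Sym2 V → ℝ := fun e => ∑ a : {v // v ∈ A}, if s(↑a, g a) = e then (1:ℝ) else 0
    with hw1
  set w2 : Sym2 V → ℝ := fun e => ∑ b : {v : V // c v = 1/2}, if s(↑b, ↑(σ b)) = e then (1/2:ℝ) else 0
    with hw2
  have hvals : ∀ v, v ∈ A ∨ c v = 0 ∨ c v = 1/2 := by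
    intro v
    rcases em (v ∈ A) with h | h
    · exact Or.inl h
    · exact Or.inr (hA2 v h)
  -- degree sums of w1
  have d1 : ∀ v, vertexDegSum w1 v = ∑ a : {v // v ∈ A},
      if v = ↑a ∨ v = g a then (1:ℝ) else 0 := by
    intro v
    rw [hw1, degsum_indicator]
    exact Finset.sum_congr rfl (fun a _ => if_congr Sym2.mem_iff rfl rfl)
  have d1A : ∀ v (hv : v ∈ A), vertexDegSum w1 v = 1 := by
    intro v hv
    rw [d1]
    have : ∀ a : {v // v ∈ A}, (v = ↑a ∨ v = g a) ↔ (⟨v, hv⟩ : {v // v ∈ A}) = a := by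
      intro a
      constructor
      · rintro (h | h)
        · exact Subtype.ext h
        · exfalso
          have h1 : c v = 1 := hA1 v hv
          have h2 : c (g a) = 0 := (hg2 a).1
          rw [← h] at h2
          linarith
      · rintro rfl
        exact Or.inl rfl
    rw [Finset.sum_congr rfl (fun a _ => if_congr (this a) rfl rfl), Finset.sum_ite_eq]
    simp
  have d1B : ∀ v, c v = 1/2 → vertexDegSum w1 v = 0 := by
    intro v hv
    rw [d1]
    refine Finset.sum_eq_zero (fun a _ => ?_)
    rw [if_neg]
    rintro (h | h)
    · have := hA1 _ a.2; rw [← h] at this; rw [this] at hv; norm_num at hv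
    · have := (hg2 a).1; rw [← h] at this; rw [this] at hv; norm_num at hv
  have d1Z : ∀ v, c v = 0 → vertexDegSum w1 v ≤ 1 := by
    intro v hv
    rw [d1]
    by_cases hex : ∃ a0, g a0 = v
    · obtain ⟨a0, ha0⟩ := hex
      have : ∀ a : {v // v ∈ A}, (v = ↑a ∨ v = g a) ↔ a0 = a := by
        intro a
        constructor
        · rintro (h | h)
          · exfalso
            have := hA1 _ a.2; rw [← h] at this; rw [this] at hv; norm_num at hv
          · exact hg1 (ha0.trans h)
        · rintro rfl
          exact Or.inr ha0.symm
      rw [Finset.sum_congr rfl (fun a _ => if_congr (this a) rfl rfl), Finset.sum_ite_eq]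
      simp
    · push_neg at hex
      rw [Finset.sum_eq_zero]
      · norm_num
      · intro a _
        rw [if_neg]
        rintro (h | h)
        · have := hA1 _ a.2; rw [← h] at this; rw [this] at hv; norm_num at hv
        · exact hex a h.symm
  -- degree sums of w2
  have d2 : ∀ v, vertexDegSum w2 v = ∑ b : {v : V // c v = 1/2},
      if v = ↑b ∨ v = ↑(σ b) then (1/2:ℝ) else 0 := by
    intro v
    rw [hw2, degsum_indicator]
    exact Finset.sum_congr rfl (fun b _ => if_congr Sym2.mem_iff rfl rfl)
  have d2B : ∀ v (hv : c v = 1/2), vertexDegSum w2 v = 1 := by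
    intro v hv
    rw [d2]
    set bv : {v : V // c v = 1/2} := ⟨v, hv⟩ with hbv
    have hne : bv ≠ σ.symm bv := by
      intro h
      have : σ bv = bv := by
        conv_lhs => rw [h]
        exact σ.apply_symm_apply bv
      exact hσne bv this
    have hcond : ∀ b : {v : V // c v = 1/2}, (v = ↑b ∨ v = ↑(σ b)) ↔ (b = bv ∨ b = σ.symm bv) := by
      intro b
      constructor
      · rintro (h | h)
        · exact Or.inl (Subtype.ext h.symm)
        · refine Or.inr ?_
          have : σ b = bv := Subtype.ext h.symm
          rw [← this, Equiv.symm_apply_apply]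
      · rintro (rfl | rfl)
        · exact Or.inl rfl
        · refine Or.inr ?_
          rw [Equiv.apply_symm_apply]
    have hsplit : ∀ b : {v : V // c v = 1/2}, (if b = bv ∨ b = σ.symm bv then (1/2:ℝ) else 0)
        = (if b = bv then (1/2:ℝ) else 0) + (if b = σ.symm bv then (1/2:ℝ) else 0) := by
      intro b
      by_cases h1 : b = bv
      · subst h1
        rw [if_pos (Or.inl rfl), if_pos rfl, if_neg hne]
        ring
      · by_cases h2 : b = σ.symm bv
        · subst h2
          rw [if_pos (Or.inr rfl), if_neg h1, if_pos rfl]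
          ring
        · rw [if_neg (not_or.mpr ⟨h1, h2⟩), if_neg h1, if_neg h2]
          ring
    rw [Finset.sum_congr rfl (fun b _ => (if_congr (hcond b) rfl rfl).trans (hsplit b)),
      Finset.sum_add_distrib, Finset.sum_ite_eq', Finset.sum_ite_eq']
    simp
    norm_num
  have d2O : ∀ v, c v ≠ 1/2 → vertexDegSum w2 v = 0 := by
    intro v hv
    rw [d2]
    refine Finset.sum_eq_zero (fun b _ => ?_)
    rw [if_neg]
    rintro (h | h)
    · exact hv (h ▸ b.2)
    · exact hv (h ▸ (σ b).2)
  have d1nonneg : ∀ v, 0 ≤ vertexDegSum w1 v := by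
    intro v
    rw [d1]
    refine Finset.sum_nonneg (fun a _ => ?_)
    split <;> norm_num
  refine ⟨fun e => w1 e + w2 e, ⟨?_, ?_, ?_⟩, ?_⟩
  · -- nonneg
    intro e
    have h1 : 0 ≤ w1 e := Finset.sum_nonneg (fun a _ => by split <;> norm_num)
    have h2 : 0 ≤ w2 e := Finset.sum_nonneg (fun b _ => by split <;> norm_num)
    show 0 ≤ w1 e + w2 e
    linarith
  · -- support
    intro e he
    have h1 : w1 e = 0 := by
      refine Finset.sum_eq_zero (fun a _ => ?_)
      rw [if_neg]
      intro h
      exact he (h ▸ G.mem_edgeSet.mpr (hg2 a).2)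
    have h2 : w2 e = 0 := by
      refine Finset.sum_eq_zero (fun b _ => ?_)
      rw [if_neg]
      intro h
      exact he (h ▸ G.mem_edgeSet.mpr (hσadj b))
    show w1 e + w2 e = 0
    rw [h1, h2, add_zero]
  · -- degree condition
    intro v
    have hsum : vertexDegSum (fun e => w1 e + w2 e) v
        = vertexDegSum w1 v + vertexDegSum w2 v := by
      rw [vertexDegSum, vertexDegSum, vertexDegSum, Finset.sum_add_distrib]
    rw [hsum]
    rcases hvals v with h | h | h
    · rw [d1A v h, d2O v (by rw [hA1 v h]; norm_num)]
      norm_num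
    · rw [d2O v (by rw [h]; norm_num)]
      have := d1Z v h
      linarith
    · rw [d1B v h, d2B v h]
      norm_num
  · -- total
    have htot : edgeTotal (fun e => w1 e + w2 e) = edgeTotal w1 + edgeTotal w2 := by
      rw [edgeTotal, edgeTotal, edgeTotal, Finset.sum_add_distrib]
    rw [htot, hw1, hw2, edgeTotal_indicator, edgeTotal_indicator]
    have hcards : (Fintype.card {v // v ∈ A} : ℝ) = A.card := by
      rw [Fintype.card_coe]
    have hcardι : (Fintype.card {v : V // c v = 1/2} : ℝ) = ((univ.filter (fun v => c v = 1/2)).card : ℝ) := by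
      exact_mod_cast Fintype.card_subtype _
    rw [hcards, hcardι]
    have hcov : coverTotal c = (A.card : ℝ) + ((univ.filter (fun v => c v = 1/2)).card : ℝ) * (1/2) := by
      rw [coverTotal]
      have hpt : ∀ v, c v = (if v ∈ A then (1:ℝ) else 0) + (if c v = 1/2 then (1/2:ℝ) else 0) := by
        intro v
        rcases hvals v with h | h | h
        · have h1 := hA1 v h
          rw [if_pos h, if_neg (by rw [h1]; norm_num), h1]
          norm_num
        · have hvA : v ∉ A := fun hh => by rw [hA1 v hh] at h; norm_num at h
          rw [if_neg hvA, if_neg (by rw [h]; norm_num), h]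
          norm_num
        · have hvA : v ∉ A := fun hh => by rw [hA1 v hh] at h; norm_num at h
          rw [if_neg hvA, if_pos h, h]
          norm_num
      rw [Finset.sum_congr rfl (fun v _ => hpt v), Finset.sum_add_distrib]
      rw [Finset.sum_ite_mem, Finset.univ_inter, Finset.sum_const, nsmul_eq_mul, mul_one]
      congr 1
      rw [← Finset.sum_filter, Finset.sum_const, nsmul_eq_mul]
    rw [hcov]
    ring

end AuxLemmas

/-- For a valid subset A, any maximum fractional matching puts total weight |A| on
edges with exactly one endpoint in A and c(H) - |A| on edges with no endpoint in A. -/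
theorem valid_subset_matching_weights
    [Fintype V] [DecidableEq V] (G : SimpleGraph V) (A : Finset V)
    (hA : ∃ c : V → ℝ, IsMinFracCover G c ∧ (∀ v ∈ A, c v = 1) ∧
      (∀ v ∉ A, c v = 0 ∨ c v = 1/2))
    (w : Sym2 V → ℝ) (hw : IsMaxFracMatching G w)
    (c₀ : V → ℝ) (hc₀ : IsMinFracCover G c₀) :
    (∑ e ∈ Finset.univ.filter
        (fun e : Sym2 V => (Finset.univ.filter (fun v : V => v ∈ e ∧ v ∈ A)).card = 1),
      w e) = (A.card : ℝ) ∧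
    (∑ e ∈ Finset.univ.filter
        (fun e : Sym2 V => (Finset.univ.filter (fun v : V => v ∈ e ∧ v ∈ A)).card = 0),
      w e) = coverTotal c₀ - (A.card : ℝ) := by
  obtain ⟨c, hc, hA1, hA2⟩ := hA
  obtain ⟨w', hw', hw'tot⟩ := exists_good_matching G A c hc hA1 hA2
  have hle : edgeTotal w ≤ coverTotal c := weak_duality G w hw.1 c hc.1
  have hge : coverTotal c ≤ edgeTotal w := hw'tot ▸ hw.2 w' hw'
  have heq : edgeTotal w = coverTotal c := le_antisymm hle hge
  obtain ⟨hE, hVdeg⟩ := slackness G w hw.1 c hc.1 heq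
  have hcc0 : coverTotal c₀ = coverTotal c := le_antisymm (hc₀.2 c hc.1) (hc.2 c₀ hc₀.1)
  have hkle : ∀ e : Sym2 V, (Finset.univ.filter (fun v : V => v ∈ e ∧ v ∈ A)).card ≤ 2 := by
    intro e
    induction e using Sym2.ind with
    | _ u v =>
      calc (Finset.univ.filter (fun x : V => x ∈ s(u, v) ∧ x ∈ A)).card
          ≤ ({u, v} : Finset V).card := by
            refine Finset.card_le_card (fun x hx => ?_)
            rcases Finset.mem_filter.mp hx with ⟨-, hx1, -⟩
            rw [Sym2.mem_iff] at hx1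
            simpa using hx1
        _ ≤ 2 := (Finset.card_insert_le u {v}).trans (by simp)
  have hk2zero : ∀ e : Sym2 V,
      (Finset.univ.filter (fun v : V => v ∈ e ∧ v ∈ A)).card = 2 → w e = 0 := by
    intro e hke
    induction e using Sym2.ind with
    | _ u v =>
      by_cases huv : u = v
      · exfalso
        subst huv
        have hsub : (Finset.univ.filter (fun x : V => x ∈ s(u, u) ∧ x ∈ A)) ⊆ {u} := by
          intro x hx
          rcases Finset.mem_filter.mp hx with ⟨-, hx1, -⟩
          rw [Sym2.mem_iff] at hx1
          simp only [Finset.mem_singleton]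
          tauto
        have := Finset.card_le_card hsub
        rw [hke, Finset.card_singleton] at this
        omega
      · have hsub : (Finset.univ.filter (fun x : V => x ∈ s(u, v) ∧ x ∈ A)) ⊆ {u, v} := by
          intro x hx
          rcases Finset.mem_filter.mp hx with ⟨-, hx1, -⟩
          rw [Sym2.mem_iff] at hx1
          simpa using hx1
        have hcard2 : ({u, v} : Finset V).card = 2 := Finset.card_pair huv
        have heqset : (Finset.univ.filter (fun x : V => x ∈ s(u, v) ∧ x ∈ A)) = {u, v} :=
          Finset.eq_of_subset_of_card_le hsub (by rw [hcard2, hke])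
        have huA : u ∈ A := by
          have : u ∈ ({u, v} : Finset V) := Finset.mem_insert_self u {v}
          rw [← heqset] at this
          exact (Finset.mem_filter.mp this).2.2
        have hvA : v ∈ A := by
          have : v ∈ ({u, v} : Finset V) := Finset.mem_insert_of_mem (Finset.mem_singleton_self v)
          rw [← heqset] at this
          exact (Finset.mem_filter.mp this).2.2
        have hEe := hE (s(u, v))
        rw [edgeCsum_eval c u v huv, hA1 u huA, hA1 v hvA] at hEe
        linarith
  have hsumA : ∑ v ∈ A, vertexDegSum w v = (A.card : ℝ) := by
    rw [Finset.sum_congr rfl (fun v hv => hVdeg v (by rw [hA1 v hv]; norm_num)),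
      Finset.sum_const, nsmul_eq_mul, mul_one]
  have hswap : ∑ v ∈ A, vertexDegSum w v
      = ∑ e : Sym2 V, ((Finset.univ.filter (fun v : V => v ∈ e ∧ v ∈ A)).card : ℝ) * w e := by
    simp only [vertexDegSum]
    rw [Finset.sum_comm' (t' := (univ : Finset (Sym2 V)))
      (s' := fun e => Finset.univ.filter (fun v : V => v ∈ e ∧ v ∈ A))
      (by intro x y; simp [and_comm])]
    exact Finset.sum_congr rfl (fun e _ => by rw [Finset.sum_const, nsmul_eq_mul])
  have hpart : ∀ F : Sym2 V → ℝ, ∑ e : Sym2 V, F e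
      = (∑ e ∈ Finset.univ.filter
          (fun e : Sym2 V => (Finset.univ.filter (fun v : V => v ∈ e ∧ v ∈ A)).card = 0), F e)
        + (∑ e ∈ Finset.univ.filter
          (fun e : Sym2 V => (Finset.univ.filter (fun v : V => v ∈ e ∧ v ∈ A)).card = 1), F e)
        + (∑ e ∈ Finset.univ.filter
          (fun e : Sym2 V => (Finset.univ.filter (fun v : V => v ∈ e ∧ v ∈ A)).card = 2), F e) := by
    intro F
    rw [← Finset.sum_filter_add_sum_filter_not univ
      (fun e : Sym2 V => (Finset.univ.filter (fun v : V => v ∈ e ∧ v ∈ A)).card = 0) F]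
    rw [← Finset.sum_filter_add_sum_filter_not
      (univ.filter (fun e : Sym2 V => ¬(Finset.univ.filter (fun v : V => v ∈ e ∧ v ∈ A)).card = 0))
      (fun e : Sym2 V => (Finset.univ.filter (fun v : V => v ∈ e ∧ v ∈ A)).card = 1) F]
    rw [Finset.filter_filter, Finset.filter_filter]
    rw [add_assoc]
    congr 2
    · apply Finset.sum_congr _ (fun _ _ => rfl)
      apply Finset.filter_congr
      intro e _
      constructor
      · exact fun h => h.2
      · intro h; omega
    · apply Finset.sum_congr _ (fun _ _ => rfl)
      apply Finset.filter_congr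
      intro e _
      have := hkle e
      constructor
      · intro h; omega
      · intro h; omega
  have hT2 : (∑ e ∈ Finset.univ.filter
      (fun e : Sym2 V => (Finset.univ.filter (fun v : V => v ∈ e ∧ v ∈ A)).card = 2), w e) = 0 :=
    Finset.sum_eq_zero (fun e he => hk2zero e (Finset.mem_filter.mp he).2)
  have hkw : ∑ e : Sym2 V, ((Finset.univ.filter (fun v : V => v ∈ e ∧ v ∈ A)).card : ℝ) * w e
      = (∑ e ∈ Finset.univ.filter
          (fun e : Sym2 V => (Finset.univ.filter (fun v : V => v ∈ e ∧ v ∈ A)).card = 1), w e) := by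
    rw [hpart (fun e => ((Finset.univ.filter (fun v : V => v ∈ e ∧ v ∈ A)).card : ℝ) * w e)]
    have h0 : (∑ e ∈ Finset.univ.filter
        (fun e : Sym2 V => (Finset.univ.filter (fun v : V => v ∈ e ∧ v ∈ A)).card = 0),
        ((Finset.univ.filter (fun v : V => v ∈ e ∧ v ∈ A)).card : ℝ) * w e) = 0 :=
      Finset.sum_eq_zero (fun e he => by
        rw [(Finset.mem_filter.mp he).2]; norm_num)
    have h1 : (∑ e ∈ Finset.univ.filter
        (fun e : Sym2 V => (Finset.univ.filter (fun v : V => v ∈ e ∧ v ∈ A)).card = 1),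
        ((Finset.univ.filter (fun v : V => v ∈ e ∧ v ∈ A)).card : ℝ) * w e)
        = (∑ e ∈ Finset.univ.filter
        (fun e : Sym2 V => (Finset.univ.filter (fun v : V => v ∈ e ∧ v ∈ A)).card = 1), w e) :=
      Finset.sum_congr rfl (fun e he => by
        rw [(Finset.mem_filter.mp he).2]; norm_num)
    have h2 : (∑ e ∈ Finset.univ.filter
        (fun e : Sym2 V => (Finset.univ.filter (fun v : V => v ∈ e ∧ v ∈ A)).card = 2),
        ((Finset.univ.filter (fun v : V => v ∈ e ∧ v ∈ A)).card : ℝ) * w e) = 0 := by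
      refine Finset.sum_eq_zero (fun e he => ?_)
      rw [hk2zero e (Finset.mem_filter.mp he).2]
      ring
    rw [h0, h1, h2]
    ring
  have hgoal1 : (∑ e ∈ Finset.univ.filter
      (fun e : Sym2 V => (Finset.univ.filter (fun v : V => v ∈ e ∧ v ∈ A)).card = 1), w e)
      = (A.card : ℝ) := by
    rw [← hkw, ← hswap, hsumA]
  refine ⟨hgoal1, ?_⟩
  have hptw := hpart w
  rw [show (∑ e : Sym2 V, w e) = edgeTotal w from rfl, heq, hgoal1, hT2] at hptw
  rw [hcc0]
  linarith
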